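/- Let g be a 2n+2 dimensional nilpotent almost abelian Lie algebra with complex structure whose matrix A (as in the normal form) has ε = 1, i.e. the overlapping block has size j > 1. Then the first Betti number b_1 = dim H^1(g, R) is odd; explicitly b_1 = 2·δ + 1 where δ is the number of Jordan blocks of the matrix B. -/

import Mathlib

/-- The almost abelian Lie algebra `g_A = ℝ e₀ ⋉_A ℝ^m`: underlying vector space
`ℝ × (Fin m → ℝ)`, with bracket `⁅(s,v), (t,w)⁆ = (0, s • A w - t • A v)`, i.e.
`⁅e₀, w⁆ = A w` on the abelian ideal `ℝ^m`. -/
def gA (m : ℕ) (_A : Matrix (Fin m) (Fin m) ℝ) : Type := ℝ × (Fin m → ℝ)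

namespace gA

variable {m : ℕ} {A : Matrix (Fin m) (Fin m) ℝ}

instance : AddCommGroup (gA m A) := inferInstanceAs (AddCommGroup (ℝ × (Fin m → ℝ)))
noncomputable instance : Module ℝ (gA m A) := inferInstanceAs (Module ℝ (ℝ × (Fin m → ℝ)))

instance : LieRing (gA m A) where
  bracket x y := ((0 : ℝ), x.1 • A.mulVec y.2 - y.1 • A.mulVec x.2)
  add_lie x y z := by
    show ((0 : ℝ), (x.1 + y.1) • A.mulVec z.2 - z.1 • A.mulVec (x.2 + y.2))
      = ((0 : ℝ) + 0, (x.1 • A.mulVec z.2 - z.1 • A.mulVec x.2)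
          + (y.1 • A.mulVec z.2 - z.1 • A.mulVec y.2))
    rw [Prod.mk.injEq]
    constructor
    · ring
    · rw [Matrix.mulVec_add]
      module
  lie_add x y z := by
    show ((0 : ℝ), x.1 • A.mulVec (y.2 + z.2) - (y.1 + z.1) • A.mulVec x.2)
      = ((0 : ℝ) + 0, (x.1 • A.mulVec y.2 - y.1 • A.mulVec x.2)
          + (x.1 • A.mulVec z.2 - z.1 • A.mulVec x.2))
    rw [Prod.mk.injEq]
    constructor
    · ring
    · rw [Matrix.mulVec_add]
      module
  lie_self x := by
    show ((0 : ℝ), x.1 • A.mulVec x.2 - x.1 • A.mulVec x.2) = (0, 0)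
    rw [Prod.mk.injEq]
    exact ⟨rfl, sub_self _⟩
  leibniz_lie x y z := by
    show ((0 : ℝ), x.1 • A.mulVec (y.1 • A.mulVec z.2 - z.1 • A.mulVec y.2)
            - (0 : ℝ) • A.mulVec x.2)
      = ((0 : ℝ), (0 : ℝ) • A.mulVec z.2 - z.1 • A.mulVec (x.1 • A.mulVec y.2 - y.1 • A.mulVec x.2))
        + ((0 : ℝ), y.1 • A.mulVec (x.1 • A.mulVec z.2 - z.1 • A.mulVec x.2)
            - (0 : ℝ) • A.mulVec y.2)
    rw [Prod.mk.injEq]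
    constructor
    · show (0 : ℝ) = 0 + 0; ring
    · show _ = (_ : Fin m → ℝ) + _
      rw [Matrix.mulVec_sub, Matrix.mulVec_sub, Matrix.mulVec_sub,
        Matrix.mulVec_smul, Matrix.mulVec_smul, Matrix.mulVec_smul,
        Matrix.mulVec_smul, Matrix.mulVec_smul, Matrix.mulVec_smul]
      module

noncomputable instance : LieAlgebra ℝ (gA m A) where
  lie_smul t x y := by
    show ((0 : ℝ), x.1 • A.mulVec (t • y.2) - (t * y.1) • A.mulVec x.2)
      = t • (((0 : ℝ), x.1 • A.mulVec y.2 - y.1 • A.mulVec x.2) : ℝ × (Fin m → ℝ))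
    rw [Prod.smul_mk, Prod.mk.injEq]
    constructor
    · simp
    · rw [Matrix.mulVec_smul]
      module

end gA

/-- The matrix `A = [[0,0],[v, B ⊕ B]] ∈ M_{2n+1}(ℝ)` with `v = (1,0,…,0)ᵀ` (placed in
the row of the first coordinate of the first copy of `B`), built from `B ∈ M_n(ℝ)`. -/
def matA (n : ℕ) (B : Matrix (Fin n) (Fin n) ℝ) :
    Matrix (Fin (2 * n + 1)) (Fin (2 * n + 1)) ℝ := fun i j =>
  let Bf : ℕ → ℕ → ℝ := fun a b =>
    if ha : a < n then if hb : b < n then B ⟨a, ha⟩ ⟨b, hb⟩ else 0 else 0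
  if (i : ℕ) = 1 ∧ (j : ℕ) = 0 then 1
  else if 1 ≤ (i : ℕ) ∧ (i : ℕ) ≤ n ∧ 1 ≤ (j : ℕ) ∧ (j : ℕ) ≤ n then
    Bf ((i : ℕ) - 1) ((j : ℕ) - 1)
  else if n + 1 ≤ (i : ℕ) ∧ n + 1 ≤ (j : ℕ) then
    Bf ((i : ℕ) - n - 1) ((j : ℕ) - n - 1)
  else 0

open Submodule Module Matrix

section helpers

lemma single_inj {k : ℕ} : Function.Injective (fun i : Fin k => (Pi.single i (1:ℝ) : Fin k → ℝ)) := by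
  intro a b hab
  have := congrFun hab a
  simp [Pi.single_apply] at this
  by_contra hne
  simp [hne] at this

lemma li_single {k : ℕ} (S : Finset (Fin k)) :
    LinearIndependent ℝ
      ((↑) : ((fun i => (Pi.single i (1:ℝ) : Fin k → ℝ)) '' (S : Set (Fin k))) → (Fin k → ℝ)) := by
  have key : LinearIndependent ℝ
      (fun x : (S : Set (Fin k)) => (Pi.single (x.1 : Fin k) (1:ℝ) : Fin k → ℝ)) := by
    have h := ((Pi.basisFun ℝ (Fin k)).linearIndependent).comp
      (fun x : (S : Set (Fin k)) => x.1) Subtype.val_injective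
    simpa [Function.comp_def] using h
  exact (linearIndepOn_iff_image (Set.injOn_of_injective single_inj)).mp key

lemma finrank_span_single {k : ℕ} (S : Finset (Fin k)) :
    finrank ℝ (span ℝ ((fun i => (Pi.single i (1:ℝ) : Fin k → ℝ)) '' (S : Set (Fin k)))) = S.card := by
  classical
  have himg : ((fun i => (Pi.single i (1:ℝ) : Fin k → ℝ)) '' (S : Set (Fin k)))
      = ((S.image (fun i => (Pi.single i (1:ℝ) : Fin k → ℝ)) : Finset _) : Set (Fin k → ℝ)) := by
    simp [Finset.coe_image]
  have li2 : LinearIndependent ℝ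
      ((↑) : ((S.image (fun i => (Pi.single i (1:ℝ) : Fin k → ℝ)) : Finset _) : Set (Fin k → ℝ))
        → (Fin k → ℝ)) := by
    rw [← himg]; exact li_single S
  rw [himg, finrank_span_finset_eq_card li2, Finset.card_image_of_injective _ single_inj]

lemma rank_mono {k : ℕ} (M : Matrix (Fin k) (Fin k) ℝ)
    (h1 : ∀ i i' j, M i j ≠ 0 → M i' j ≠ 0 → i = i')
    (h3 : ∀ i j, M i j ≠ 0 → M i j = 1) [DecidablePred fun i : Fin k => ∃ j, M i j ≠ 0] :
    finrank ℝ (LinearMap.range M.mulVecLin)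
      = (Finset.univ.filter (fun i : Fin k => ∃ j, M i j ≠ 0)).card := by
  classical
  set S := Finset.univ.filter (fun i : Fin k => ∃ j, M i j ≠ 0) with hS
  have hcol : ∀ i j, M i j ≠ 0 → Mᵀ j = Pi.single i 1 := by
    intro i j hij
    funext i'
    by_cases h : i' = i
    · subst h; simp [Matrix.transpose_apply, h3 i' j hij]
    · have : M i' j = 0 := by
        by_contra h'
        exact h (h1 i' i j h' hij)
      simp [Matrix.transpose_apply, this, Pi.single_apply, h]
  have hspan : LinearMap.range M.mulVecLin
      = span ℝ ((fun i => (Pi.single i (1:ℝ) : Fin k → ℝ)) '' (S : Set (Fin k))) := by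
    rw [Matrix.range_mulVecLin]
    apply le_antisymm
    · rw [span_le]
      rintro _ ⟨j, rfl⟩
      by_cases hj : ∃ i, M i j ≠ 0
      · obtain ⟨i, hi⟩ := hj
        rw [show M.col j = Mᵀ j from rfl, hcol i j hi]
        exact subset_span ⟨i, by simp [hS]; exact ⟨j, hi⟩, rfl⟩
      · push_neg at hj
        have : Mᵀ j = 0 := funext fun i => hj i
        rw [show M.col j = Mᵀ j from rfl, this]
        exact zero_mem _
    · rw [span_le]
      rintro _ ⟨i, hi, rfl⟩
      simp only [hS, Finset.coe_filter, Set.mem_setOf_eq, Finset.mem_univ, true_and] at hi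
      obtain ⟨j, hj⟩ := hi
      show (Pi.single i 1 : Fin k → ℝ) ∈ span ℝ (Set.range Mᵀ)
      rw [← hcol i j hj]
      exact subset_span ⟨j, rfl⟩
  rw [hspan, finrank_span_single]

end helpers

section liepart

noncomputable def inc (m : ℕ) (A : Matrix (Fin m) (Fin m) ℝ) : (Fin m → ℝ) →ₗ[ℝ] gA m A :=
  LinearMap.inr ℝ ℝ (Fin m → ℝ)

lemma inc_inj (m : ℕ) (A : Matrix (Fin m) (Fin m) ℝ) : Function.Injective (inc m A) :=
  LinearMap.inr_injective

lemma gA.bracket_def {m : ℕ} {A : Matrix (Fin m) (Fin m) ℝ} (x y : gA m A) :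
    ⁅x, y⁆ = ((0:ℝ), x.1 • A.mulVec y.2 - y.1 • A.mulVec x.2) := rfl

lemma derived_eq (m : ℕ) (A : Matrix (Fin m) (Fin m) ℝ) :
    LieSubmodule.toSubmodule ⁅(⊤ : LieIdeal ℝ (gA m A)), (⊤ : LieIdeal ℝ (gA m A))⁆
      = Submodule.map (inc m A) (LinearMap.range A.mulVecLin) := by
  rw [LieSubmodule.lieIdeal_oper_eq_linear_span']
  apply le_antisymm
  · rw [span_le]
    rintro _ ⟨x, -, y, -, rfl⟩
    rw [gA.bracket_def]
    refine ⟨A.mulVec (x.1 • y.2 - y.1 • x.2), ⟨x.1 • y.2 - y.1 • x.2, rfl⟩, ?_⟩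
    show ((0:ℝ), A.mulVec (x.1 • y.2 - y.1 • x.2)) = _
    rw [Matrix.mulVec_sub, Matrix.mulVec_smul, Matrix.mulVec_smul]
  · rintro _ ⟨w, ⟨u, rfl⟩, rfl⟩
    apply subset_span
    refine ⟨((1:ℝ), 0), trivial, ((0:ℝ), u), trivial, ?_⟩
    show ((0:ℝ), (1:ℝ) • A.mulVec u - (0:ℝ) • A.mulVec 0) = ((0:ℝ), A.mulVecLin u)
    simp

lemma finrank_derived (m : ℕ) (A : Matrix (Fin m) (Fin m) ℝ) :
    finrank ℝ (↥⁅(⊤ : LieIdeal ℝ (gA m A)), (⊤ : LieIdeal ℝ (gA m A))⁆)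
      = finrank ℝ (LinearMap.range A.mulVecLin) := by
  have h := derived_eq m A
  have e1 : finrank ℝ (↥⁅(⊤ : LieIdeal ℝ (gA m A)), (⊤ : LieIdeal ℝ (gA m A))⁆)
      = finrank ℝ (Submodule.map (inc m A) (LinearMap.range A.mulVecLin)) :=
    LinearEquiv.finrank_eq (LinearEquiv.ofEq _ _ h)
  rw [e1]
  exact (LinearEquiv.finrank_eq
    (Submodule.equivMapOfInjective (inc m A) (inc_inj m A) (LinearMap.range A.mulVecLin))).symm

lemma finrank_gA (m : ℕ) (A : Matrix (Fin m) (Fin m) ℝ) :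
    finrank ℝ (gA m A) = m + 1 := by
  show finrank ℝ (ℝ × (Fin m → ℝ)) = m + 1
  simp [add_comm]

end liepart

section matApart
variable {n : ℕ} {B : Matrix (Fin n) (Fin n) ℝ}

lemma bnd1 (a : Fin n) : (a:ℕ)+1 < 2*n+1 := by have := a.isLt; omega
lemma bnd2 (a : Fin n) : (a:ℕ)+n+1 < 2*n+1 := by have := a.isLt; omega
lemma bnd0 : (0:ℕ) < 2*n+1 := by omega
lemma bndone (hn : 0 < n) : (1:ℕ) < 2*n+1 := by omega

lemma matA_spec {i j : Fin (2*n+1)} (h : matA n B i j ≠ 0) :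
    ((i:ℕ) = 1 ∧ (j:ℕ) = 0) ∨
    (∃ a b : Fin n, B a b ≠ 0 ∧ (i:ℕ) = (a:ℕ)+1 ∧ (j:ℕ) = (b:ℕ)+1) ∨
    (∃ a b : Fin n, B a b ≠ 0 ∧ (i:ℕ) = (a:ℕ)+n+1 ∧ (j:ℕ) = (b:ℕ)+n+1) := by
  have hi := i.isLt
  have hj := j.isLt
  simp only [matA] at h
  by_cases c1 : (i:ℕ) = 1 ∧ (j:ℕ) = 0
  · exact Or.inl c1
  rw [if_neg c1] at h
  by_cases c2 : 1 ≤ (i:ℕ) ∧ (i:ℕ) ≤ n ∧ 1 ≤ (j:ℕ) ∧ (j:ℕ) ≤ n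
  · rw [if_pos c2] at h
    obtain ⟨hi1, hi2, hj1, hj2⟩ := c2
    have ha : (i:ℕ)-1 < n := by omega
    have hb : (j:ℕ)-1 < n := by omega
    rw [dif_pos ha, dif_pos hb] at h
    refine Or.inr (Or.inl ⟨⟨_, ha⟩, ⟨_, hb⟩, h, ?_, ?_⟩)
    · show (i:ℕ) = (i:ℕ)-1+1; omega
    · show (j:ℕ) = (j:ℕ)-1+1; omega
  rw [if_neg c2] at h
  by_cases c3 : n+1 ≤ (i:ℕ) ∧ n+1 ≤ (j:ℕ)
  · rw [if_pos c3] at h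
    obtain ⟨hi1, hj1⟩ := c3
    have ha : (i:ℕ)-n-1 < n := by omega
    have hb : (j:ℕ)-n-1 < n := by omega
    rw [dif_pos ha, dif_pos hb] at h
    refine Or.inr (Or.inr ⟨⟨_, ha⟩, ⟨_, hb⟩, h, ?_, ?_⟩)
    · show (i:ℕ) = (i:ℕ)-n-1+n+1; omega
    · show (j:ℕ) = (j:ℕ)-n-1+n+1; omega
  rw [if_neg c3] at h
  exact absurd rfl h

lemma matA_v (hn : 0 < n) :
    matA n B ⟨1, by omega⟩ ⟨0, by omega⟩ = 1 := by
  simp [matA]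

lemma matA_blk1 (a b : Fin n) :
    matA n B ⟨(a:ℕ)+1, by omega⟩ ⟨(b:ℕ)+1, by omega⟩ = B a b := by
  have ha := a.isLt
  have hb := b.isLt
  simp only [matA]
  rw [if_neg (by simp), if_pos (by simp), dif_pos (by simpa using ha),
    dif_pos (by simpa using hb)]
  congr 1 <;> exact Fin.ext (by simp)

lemma matA_blk2 (a b : Fin n) :
    matA n B ⟨(a:ℕ)+n+1, by omega⟩ ⟨(b:ℕ)+n+1, by omega⟩ = B a b := by
  have ha := a.isLt
  have hb := b.isLt
  simp only [matA]
  rw [if_neg (by simp), if_neg (by simp), if_pos (by simp),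
    dif_pos (by omega), dif_pos (by omega)]
  have e1 : (⟨(a:ℕ)+n+1-n-1, by omega⟩ : Fin n) = a :=
    Fin.ext (show (a:ℕ)+n+1-n-1 = (a:ℕ) by omega)
  have e2 : (⟨(b:ℕ)+n+1-n-1, by omega⟩ : Fin n) = b :=
    Fin.ext (show (b:ℕ)+n+1-n-1 = (b:ℕ) by omega)
  rw [e1, e2]

variable (hn : 0 < n)
  (hBJordan : ∀ i j, B i j ≠ 0 → ((i : ℕ) = (j : ℕ) + 1 ∧ B i j = 1))

include hBJordan in
lemma matA_loc {i j : Fin (2*n+1)} (h : matA n B i j ≠ 0) :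
    ((i:ℕ) = 1 ∧ (j:ℕ) = 0) ∨
    ((i:ℕ) = (j:ℕ)+1 ∧ 1 ≤ (j:ℕ) ∧ (j:ℕ) ≤ n) ∨
    ((i:ℕ) = (j:ℕ)+1 ∧ n+1 ≤ (j:ℕ)) := by
  rcases matA_spec h with c1 | ⟨a, b, hab, hia, hjb⟩ | ⟨a, b, hab, hia, hjb⟩
  · exact Or.inl c1
  · have := (hBJordan a b hab).1
    have hb := b.isLt
    have ha := a.isLt
    exact Or.inr (Or.inl (by omega))
  · have := (hBJordan a b hab).1
    have hb := b.isLt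
    have ha := a.isLt
    exact Or.inr (Or.inr (by omega))

include hBJordan in
lemma matA_h1 : ∀ i i' j, matA n B i j ≠ 0 → matA n B i' j ≠ 0 → i = i' := by
  intro i i' j h h'
  have l1 := matA_loc hBJordan h
  have l2 := matA_loc hBJordan h'
  exact Fin.ext (by omega)

include hn hBJordan in
lemma matA_h3 : ∀ i j, matA n B i j ≠ 0 → matA n B i j = 1 := by
  intro i j h
  rcases matA_spec h with ⟨hi1, hj0⟩ | ⟨a, b, hab, hia, hjb⟩ | ⟨a, b, hab, hia, hjb⟩
  · have ei : i = ⟨1, bndone hn⟩ := Fin.ext hi1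
    have ej : j = ⟨0, bnd0⟩ := Fin.ext hj0
    rw [ei, ej, matA_v hn]
  · have ei : i = ⟨(a:ℕ)+1, bnd1 a⟩ := Fin.ext hia
    have ej : j = ⟨(b:ℕ)+1, bnd1 b⟩ := Fin.ext hjb
    rw [ei, ej]
    rw [show matA n B ⟨(a:ℕ)+1, bnd1 a⟩ ⟨(b:ℕ)+1, bnd1 b⟩ = B a b from matA_blk1 a b]
    exact (hBJordan a b hab).2
  · have ei : i = ⟨(a:ℕ)+n+1, bnd2 a⟩ := Fin.ext hia
    have ej : j = ⟨(b:ℕ)+n+1, bnd2 b⟩ := Fin.ext hjb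
    rw [ei, ej]
    rw [show matA n B ⟨(a:ℕ)+n+1, bnd2 a⟩ ⟨(b:ℕ)+n+1, bnd2 b⟩ = B a b from matA_blk2 a b]
    exact (hBJordan a b hab).2

include hn hBJordan in
lemma card_SA [DecidablePred fun i : Fin (2*n+1) => ∃ j, matA n B i j ≠ 0]
    [DecidablePred fun a : Fin n => ∃ b, B a b ≠ 0] :
    (Finset.univ.filter (fun i : Fin (2*n+1) => ∃ j, matA n B i j ≠ 0)).card
      = 2 * (Finset.univ.filter (fun a : Fin n => ∃ b, B a b ≠ 0)).card + 1 := by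
  classical
  set SB := Finset.univ.filter (fun a : Fin n => ∃ b, B a b ≠ 0) with hSB
  have hmemSB : ∀ a : Fin n, a ∈ SB ↔ ∃ b, B a b ≠ 0 := by
    intro a; rw [hSB]; simp
  have hkey : Finset.univ.filter (fun i : Fin (2*n+1) => ∃ j, matA n B i j ≠ 0)
      = insert (⟨1, bndone hn⟩ : Fin (2*n+1))
          (SB.image (fun a : Fin n => (⟨(a:ℕ)+1, bnd1 a⟩ : Fin (2*n+1)))
            ∪ SB.image (fun a : Fin n => (⟨(a:ℕ)+n+1, bnd2 a⟩ : Fin (2*n+1)))) := by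
    ext i
    rw [Finset.mem_filter, Finset.mem_insert, Finset.mem_union]
    simp only [Finset.mem_univ, true_and]
    constructor
    · rintro ⟨j, hj⟩
      rcases matA_spec hj with ⟨hi1, _⟩ | ⟨a, b, hab, hia, _⟩ | ⟨a, b, hab, hia, _⟩
      · exact Or.inl (Fin.ext hi1)
      · refine Or.inr (Or.inl (Finset.mem_image.mpr ⟨a, (hmemSB a).mpr ⟨b, hab⟩, ?_⟩))
        exact Fin.ext hia.symm
      · refine Or.inr (Or.inr (Finset.mem_image.mpr ⟨a, (hmemSB a).mpr ⟨b, hab⟩, ?_⟩))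
        exact Fin.ext hia.symm
    · rintro (rfl | hx | hx)
      · exact ⟨⟨0, bnd0⟩, by rw [matA_v hn]; exact one_ne_zero⟩
      · obtain ⟨a, ha, rfl⟩ := Finset.mem_image.mp hx
        obtain ⟨b, hb⟩ := (hmemSB a).mp ha
        exact ⟨⟨(b:ℕ)+1, bnd1 b⟩, by rw [matA_blk1 a b]; exact hb⟩
      · obtain ⟨a, ha, rfl⟩ := Finset.mem_image.mp hx
        obtain ⟨b, hb⟩ := (hmemSB a).mp ha
        exact ⟨⟨(b:ℕ)+n+1, bnd2 b⟩, by rw [matA_blk2 a b]; exact hb⟩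
  rw [hkey]
  have hinj1 : Function.Injective (fun a : Fin n => (⟨(a:ℕ)+1, bnd1 a⟩ : Fin (2*n+1))) := by
    intro a b hab
    have : (a:ℕ)+1 = (b:ℕ)+1 := congrArg Fin.val hab
    exact Fin.ext (by omega)
  have hinj2 : Function.Injective (fun a : Fin n => (⟨(a:ℕ)+n+1, bnd2 a⟩ : Fin (2*n+1))) := by
    intro a b hab
    have : (a:ℕ)+n+1 = (b:ℕ)+n+1 := congrArg Fin.val hab
    exact Fin.ext (by omega)
  have hdisj : Disjoint (SB.image (fun a : Fin n => (⟨(a:ℕ)+1, bnd1 a⟩ : Fin (2*n+1))))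
      (SB.image (fun a : Fin n => (⟨(a:ℕ)+n+1, bnd2 a⟩ : Fin (2*n+1)))) := by
    rw [Finset.disjoint_left]
    rintro x hx1 hx2
    obtain ⟨a, _, rfl⟩ := Finset.mem_image.mp hx1
    obtain ⟨a', _, he⟩ := Finset.mem_image.mp hx2
    have hv : (a':ℕ)+n+1 = (a:ℕ)+1 := congrArg Fin.val he
    have := a.isLt
    omega
  have hnotmem : (⟨1, bndone hn⟩ : Fin (2*n+1)) ∉
      (SB.image (fun a : Fin n => (⟨(a:ℕ)+1, bnd1 a⟩ : Fin (2*n+1)))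
        ∪ SB.image (fun a : Fin n => (⟨(a:ℕ)+n+1, bnd2 a⟩ : Fin (2*n+1)))) := by
    rw [Finset.mem_union]
    rintro (hx | hx)
    · obtain ⟨a, ha, he⟩ := Finset.mem_image.mp hx
      have hval : (a:ℕ)+1 = 1 := congrArg Fin.val he
      obtain ⟨b, hb⟩ := (hmemSB a).mp ha
      have := (hBJordan a b hb).1
      omega
    · obtain ⟨a, ha, he⟩ := Finset.mem_image.mp hx
      have hval : (a:ℕ)+n+1 = 1 := congrArg Fin.val he
      omega
  rw [Finset.card_insert_of_notMem hnotmem, Finset.card_union_of_disjoint hdisj,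
    Finset.card_image_of_injective _ hinj1, Finset.card_image_of_injective _ hinj2]
  ring

end matApart

/-- Let `g` be the `2n+2`-dimensional nilpotent almost abelian Lie algebra
with complex structure whose matrix `A` (in the normal form) has `ε = 1`, i.e.
`g = ℝ e₀ ⋉_A ℝ^{2n+1}` with `A = [[0,0],[v, B ⊕ B]]`, `v = (1,0,…,0)ᵀ` and `B ∈ M_n(ℝ)`
nilpotent in Jordan normal form.  Then the first Betti number
`b₁ = dim H¹(g,ℝ) = dim g - dim [g,g]` is odd; explicitly `b₁ = 2δ + 1`, where
`δ = dim ker B` is the number of Jordan blocks of `B`. -/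
theorem stmt19 (n : ℕ) (hn : 0 < n) (B : Matrix (Fin n) (Fin n) ℝ)
    (hBnil : IsNilpotent B)
    (hBJordan : ∀ i j, B i j ≠ 0 → ((i : ℕ) = (j : ℕ) + 1 ∧ B i j = 1)) :
    Module.finrank ℝ (gA (2 * n + 1) (matA n B)) -
        Module.finrank ℝ
          (↥⁅(⊤ : LieIdeal ℝ (gA (2 * n + 1) (matA n B))),
             (⊤ : LieIdeal ℝ (gA (2 * n + 1) (matA n B)))⁆) =
      2 * Module.finrank ℝ (LinearMap.ker B.mulVecLin) + 1 ∧
    Odd (Module.finrank ℝ (gA (2 * n + 1) (matA n B)) -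
        Module.finrank ℝ
          (↥⁅(⊤ : LieIdeal ℝ (gA (2 * n + 1) (matA n B))),
             (⊤ : LieIdeal ℝ (gA (2 * n + 1) (matA n B)))⁆)) := by
  classical
  have hrB : finrank ℝ (LinearMap.range B.mulVecLin)
      = (Finset.univ.filter (fun a : Fin n => ∃ b, B a b ≠ 0)).card :=
    rank_mono B
      (fun i i' j hi hi' => Fin.ext (by rw [(hBJordan i j hi).1, (hBJordan i' j hi').1]))
      (fun i j h => (hBJordan i j h).2)
  have hrA : finrank ℝ (LinearMap.range (matA n B).mulVecLin)
      = 2 * (Finset.univ.filter (fun a : Fin n => ∃ b, B a b ≠ 0)).card + 1 := by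
    rw [rank_mono (matA n B) (matA_h1 hBJordan) (matA_h3 hn hBJordan), card_SA hn hBJordan]
  have hker : finrank ℝ (LinearMap.range B.mulVecLin) + finrank ℝ (LinearMap.ker B.mulVecLin)
      = n := by
    rw [LinearMap.finrank_range_add_finrank_ker]
    simp
  have hg := finrank_gA (2*n+1) (matA n B)
  have hd := finrank_derived (2*n+1) (matA n B)
  rw [hd, hrA] at *
  rw [hg]
  rw [hrB] at hker
  constructor
  · omega
  · rw [Nat.odd_iff]
    omega
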